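/- (Closed form of the twisted factor, §2.3.) With the notation of the context, g · J_0(x_0) · d_n(vz) · g^{−1} = ∏_{j=0}^{n−1} (1 + (−1)^j·x_0·x_1⋯x_j·z·E_{n,j+1}), the product taken left-to-right in increasing j, and this matrix also equals 1 + ∑_{j=0}^{n−1} (−1)^j·x_0·x_1⋯x_j·z·E_{n,j+1}. -/

import Mathlib

set_option linter.unusedSectionVars false

noncomputable section
open Matrix
open Fin.NatCast

/-- ascending product `F 0 * F 1 * ⋯ * F (k−1)`. -/
def prodAsc {M : Type*} [Monoid M] (F : ℕ → M) : ℕ → M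
  | 0 => 1
  | k + 1 => prodAsc F k * F k

/-- descending product `F (k−1) * ⋯ * F 1 * F 0`. -/
def prodDesc {M : Type*} [Monoid M] (F : ℕ → M) : ℕ → M
  | 0 => 1
  | k + 1 => F k * prodDesc F k

variable {R : Type*} [CommRing R]

/-- `J_k(c) := 1 + c·E_{k,k+1}` for `1 ≤ k ≤ n−1`. -/
def Jmat (n : ℕ) [NeZero n] (k : ℕ) (c : R) : Matrix (Fin n) (Fin n) R :=
  1 + c • single (((k - 1 : ℕ)) : Fin n) ((k : ℕ) : Fin n) (1 : R)

/-- `J_0(c) := 1 + c·z·E_{n,1}`. -/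
def J0mat (n : ℕ) [NeZero n] (z c : R) : Matrix (Fin n) (Fin n) R :=
  1 + (c * z) • single (((n - 1 : ℕ)) : Fin n) ((0 : ℕ) : Fin n) (1 : R)

/-- `d_n(c) := 1 + c·E_{n,n}`. -/
def dnmat (n : ℕ) [NeZero n] (c : R) : Matrix (Fin n) (Fin n) R :=
  1 + c • single (((n - 1 : ℕ)) : Fin n) (((n - 1 : ℕ)) : Fin n) (1 : R)

section Aux
open Finset

variable {n : ℕ} [NeZero n]

private lemma cast_ne_cast {a b : ℕ} (ha : a < n) (hb : b < n) (h : a ≠ b) :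
    ((a : Fin n)) ≠ ((b : Fin n)) := by
  intro hab
  exact h (by simpa [Fin.val_cast_of_lt ha, Fin.val_cast_of_lt hb] using congrArg Fin.val hab)

private lemma sE_mul_sE_ne {i l : Fin n} {j k : Fin n} (h : j ≠ k) (a b : R) :
    (a • single i j (1 : R)) * (b • single k l (1 : R)) = 0 := by
  rw [smul_mul_assoc, mul_smul_comm, Matrix.single_mul_single_of_ne (h := h), smul_zero, smul_zero]

private lemma sE_mul_sE_same (i j l : Fin n) (a b : R) :
    (a • single i j (1 : R)) * (b • single j l (1 : R))
      = (a * b) • single i l (1 : R) := by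
  rw [smul_mul_assoc, mul_smul_comm, Matrix.single_mul_single_same, smul_smul, one_mul]

/-- coefficient `(−1)^j x_0⋯x_j z`. -/
private def cC (x : Fin n → R) (z : R) (j : ℕ) : R :=
  ((-1 : R) ^ j * ∏ m ∈ Finset.range (j + 1), x ((m : ℕ) : Fin n)) * z

private lemma prodAsc_eq (x : Fin n → R) (z : R) :
    ∀ k, k ≤ n →
      prodAsc (fun j => 1 + cC x z j •
          single (((n - 1 : ℕ)) : Fin n) ((j : ℕ) : Fin n) (1 : R)) k
        = 1 + ∑ j ∈ range k, cC x z j •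
            single (((n - 1 : ℕ)) : Fin n) ((j : ℕ) : Fin n) (1 : R)
  | 0, _ => by simp [prodAsc]
  | k + 1, hk => by
    have hn1 : 0 < n := Nat.pos_of_ne_zero (NeZero.ne n)
    have IH := prodAsc_eq x z k (Nat.le_of_succ_le hk)
    rw [prodAsc, IH]
    have hz : (∑ j ∈ range k, cC x z j •
            single (((n - 1 : ℕ)) : Fin n) ((j : ℕ) : Fin n) (1 : R))
        * (cC x z k • single (((n - 1 : ℕ)) : Fin n) ((k : ℕ) : Fin n) (1 : R)) = 0 := by
      rw [Finset.sum_mul]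
      refine Finset.sum_eq_zero fun j hj => ?_
      have hj' : j < k := Finset.mem_range.mp hj
      exact sE_mul_sE_ne (cast_ne_cast (by omega) (by omega) (by omega)) _ _
    rw [mul_add, mul_one, add_mul, one_mul, hz, add_zero, sum_range_succ, add_assoc]

private lemma conj_eq (hn : 2 ≤ n) (x : Fin n → R) (z : R) :
    ∀ k, k ≤ n - 2 →
      prodDesc (fun j => Jmat n (j + 1) (x ((j + 1 : ℕ) : Fin n))) k
          * J0mat n z (x 0)
          * dnmat n ((((-1 : R) ^ (n - 1)) * ∏ i : Fin n, x i) * z)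
          * prodAsc (fun j => Jmat n (j + 1) (-(x ((j + 1 : ℕ) : Fin n)))) k
        = 1 + (∑ j ∈ range (k + 1), cC x z j •
              single (((n - 1 : ℕ)) : Fin n) ((j : ℕ) : Fin n) (1 : R))
            + ((((-1 : R) ^ (n - 1)) * ∏ i : Fin n, x i) * z) •
                single (((n - 1 : ℕ)) : Fin n) (((n - 1 : ℕ)) : Fin n) (1 : R)
  | 0, _ => by
    have h0 : ((x 0 * z) • single (((n - 1 : ℕ)) : Fin n) ((0 : ℕ) : Fin n) (1 : R))
        * (((((-1 : R) ^ (n - 1)) * ∏ i : Fin n, x i) * z) •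
            single (((n - 1 : ℕ)) : Fin n) (((n - 1 : ℕ)) : Fin n) (1 : R)) = 0 :=
      sE_mul_sE_ne (cast_ne_cast (by omega) (by omega) (by omega)) _ _
    simp only [prodDesc, prodAsc, one_mul, mul_one, J0mat, dnmat]
    rw [mul_add, mul_one, add_mul, one_mul, h0, add_zero]
    congr 2
    simp [cC, Finset.sum_range_one]
  | k + 1, hk => by
    have hk' : k ≤ n - 2 := Nat.le_of_succ_le hk
    have IH := conj_eq hn x z k hk'
    set w : R := (((-1 : R) ^ (n - 1)) * ∏ i : Fin n, x i) * z with hw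
    set S := ∑ j ∈ range (k + 1), cC x z j •
        single (((n - 1 : ℕ)) : Fin n) ((j : ℕ) : Fin n) (1 : R) with hS
    set a : R := x ((k + 1 : ℕ) : Fin n) with ha
    set E1 := single ((k : ℕ) : Fin n) (((k + 1 : ℕ)) : Fin n) (1 : R) with hE1
    set E2 := single (((n - 1 : ℕ)) : Fin n) (((n - 1 : ℕ)) : Fin n) (1 : R) with hE2
    have hJ : Jmat n (k + 1) (x ((k + 1 : ℕ) : Fin n)) = 1 + a • E1 := by
      rw [Jmat]; simp only [Nat.add_sub_cancel, ← ha, ← hE1]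
    have hJ' : Jmat n (k + 1) (-(x ((k + 1 : ℕ) : Fin n))) = 1 + (-a) • E1 := by
      rw [Jmat]; simp only [Nat.add_sub_cancel, ← ha, ← hE1]
    have key : prodDesc (fun j => Jmat n (j + 1) (x ((j + 1 : ℕ) : Fin n))) (k + 1)
          * J0mat n z (x 0) * dnmat n w
          * prodAsc (fun j => Jmat n (j + 1) (-(x ((j + 1 : ℕ) : Fin n)))) (k + 1)
        = (1 + a • E1) * (1 + S + w • E2) * (1 + (-a) • E1) := by
      rw [prodDesc, prodAsc, hJ, hJ']
      calc Jmat n (k + 1) (x ((k + 1 : ℕ) : Fin n))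
              * prodDesc (fun j => Jmat n (j + 1) (x ((j + 1 : ℕ) : Fin n))) k
              * J0mat n z (x 0) * dnmat n w
              * (prodAsc (fun j => Jmat n (j + 1) (-(x ((j + 1 : ℕ) : Fin n)))) k
                 * Jmat n (k + 1) (-(x ((k + 1 : ℕ) : Fin n))))
          = Jmat n (k + 1) (x ((k + 1 : ℕ) : Fin n))
              * (prodDesc (fun j => Jmat n (j + 1) (x ((j + 1 : ℕ) : Fin n))) k
                 * J0mat n z (x 0) * dnmat n w
                 * prodAsc (fun j => Jmat n (j + 1) (-(x ((j + 1 : ℕ) : Fin n)))) k)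
              * Jmat n (k + 1) (-(x ((k + 1 : ℕ) : Fin n))) := by
            simp only [mul_assoc]
        _ = (1 + a • E1) * (1 + S + w • E2) * (1 + (-a) • E1) := by rw [IH, hJ, hJ']
    -- zero products
    have hES : (a • E1) * S = 0 := by
      rw [hS, Finset.mul_sum]
      refine Finset.sum_eq_zero fun j hj => ?_
      exact sE_mul_sE_ne (cast_ne_cast (by omega) (by omega) (by omega)) _ _
    have hEE2 : (a • E1) * (w • E2) = 0 :=
      sE_mul_sE_ne (cast_ne_cast (by omega) (by omega) (by omega)) _ _
    have hE2E : (w • E2) * ((-a) • E1) = 0 :=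
      sE_mul_sE_ne (cast_ne_cast (by omega) (by omega) (by omega)) _ _
    have hE1E1 : (a • E1) * ((-a) • E1) = 0 :=
      sE_mul_sE_ne (cast_ne_cast (by omega) (by omega) (by omega)) _ _
    have hSE : S * ((-a) • E1) = (cC x z k * (-a)) •
        single (((n - 1 : ℕ)) : Fin n) (((k + 1 : ℕ)) : Fin n) (1 : R) := by
      rw [hS, Finset.sum_mul]
      rw [Finset.sum_eq_single_of_mem k (Finset.self_mem_range_succ k)
        (fun j hj hjk => sE_mul_sE_ne
          (cast_ne_cast (by have := Finset.mem_range.mp hj; omega) (by omega) hjk) _ _)]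
      exact sE_mul_sE_same _ _ _ _ _
    have hcoef : cC x z k * (-a) = cC x z (k + 1) := by
      simp only [cC, ha, pow_succ, Finset.prod_range_succ]
      ring
    rw [key]
    simp only [mul_add, add_mul, mul_one, one_mul, hES, hEE2, hE2E, hE1E1, hSE,
      add_zero, zero_add, hcoef]
    rw [sum_range_succ]
    simp only [neg_smul]
    abel

end Aux

/-- **Closed form of the twisted factor (§2.3)**. -/
theorem twisted_factor_closed_form (n : ℕ) [NeZero n] (hn : 2 ≤ n)
    (x : Fin n → R) (z : R) :
    ((prodDesc (fun j => Jmat n (j + 1) (x ((j + 1 : ℕ) : Fin n))) (n - 2))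
        * J0mat n z (x 0)
        * dnmat n ((((-1 : R) ^ (n - 1)) * ∏ i : Fin n, x i) * z)
        * (prodAsc (fun j => Jmat n (j + 1) (-(x ((j + 1 : ℕ) : Fin n)))) (n - 2))
      = prodAsc (fun j =>
          1 + (((-1 : R) ^ j * ∏ m ∈ Finset.range (j + 1), x ((m : ℕ) : Fin n)) * z) •
            single (((n - 1 : ℕ)) : Fin n) ((j : ℕ) : Fin n) (1 : R)) n)
    ∧
    ((prodDesc (fun j => Jmat n (j + 1) (x ((j + 1 : ℕ) : Fin n))) (n - 2))
        * J0mat n z (x 0)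
        * dnmat n ((((-1 : R) ^ (n - 1)) * ∏ i : Fin n, x i) * z)
        * (prodAsc (fun j => Jmat n (j + 1) (-(x ((j + 1 : ℕ) : Fin n)))) (n - 2))
      = 1 + ∑ j ∈ Finset.range n,
          (((-1 : R) ^ j * ∏ m ∈ Finset.range (j + 1), x ((m : ℕ) : Fin n)) * z) •
            single (((n - 1 : ℕ)) : Fin n) ((j : ℕ) : Fin n) (1 : R)) := by
  have hc : ∀ j : ℕ, (((-1 : R) ^ j * ∏ m ∈ Finset.range (j + 1), x ((m : ℕ) : Fin n)) * z)
      = cC x z j := fun j => rfl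
  have key := conj_eq hn x z (n - 2) le_rfl
  rw [show n - 2 + 1 = n - 1 by omega] at key
  have hprod : (∏ i : Fin n, x i) = ∏ m ∈ Finset.range n, x ((m : ℕ) : Fin n) := by
    rw [← Fin.prod_univ_eq_prod_range (fun m => x ((m : ℕ) : Fin n)) n]
    simp [Fin.cast_val_eq_self]
  have hvz : (((-1 : R) ^ (n - 1)) * ∏ i : Fin n, x i) * z = cC x z (n - 1) := by
    rw [cC, show n - 1 + 1 = n by omega, hprod]
  have hsum2 : (prodDesc (fun j => Jmat n (j + 1) (x ((j + 1 : ℕ) : Fin n))) (n - 2))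
        * J0mat n z (x 0)
        * dnmat n ((((-1 : R) ^ (n - 1)) * ∏ i : Fin n, x i) * z)
        * (prodAsc (fun j => Jmat n (j + 1) (-(x ((j + 1 : ℕ) : Fin n)))) (n - 2))
      = 1 + ∑ j ∈ Finset.range n, cC x z j •
          single (((n - 1 : ℕ)) : Fin n) ((j : ℕ) : Fin n) (1 : R) := by
    rw [key, hvz]
    have hrange : Finset.range n = Finset.range (n - 1 + 1) := by
      rw [Nat.sub_add_cancel (by omega : 1 ≤ n)]
    rw [hrange, Finset.sum_range_succ, add_assoc]
  constructor
  · simp only [hc]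
    rw [hsum2, prodAsc_eq x z n le_rfl]
  · simp only [hc]
    exact hsum2
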